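/- arXiv:2204.10013 — 9 statements merged into one kernel-verified Lean document; each statement's English description precedes it below -/
import Mathlib

section
/- Let T be a C*-embedded subset of a Tychonoff space X. If T is S-embedded in X, then for every g ∈ C(X) that is bounded away from zero on every hard subset of T, the set T and the zero set Z(g) are completely separated in X. -/
open Set ContinuousMap

/-- Points of the Stone–Čech compactification belonging to the Hewitt
realcompactification: those `p` to which every real-valued continuous function
on `Y` extends continuously (on the subspace `Y ∪ {p}` of `βY`). -/
def hewittSet (Y : Type*) [TopologicalSpace Y] : Set (StoneCech Y) :=
  {p | ∀ f : C(Y, ℝ), ∃ g : C((Set.range (stoneCechUnit : Y → StoneCech Y) ∪ {p} :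
      Set (StoneCech Y)), ℝ), ∀ x : Y, g ⟨stoneCechUnit x, Or.inl ⟨x, rfl⟩⟩ = f x}

/-- The subspace `Y ∪ K` of `βY`, where `K = cl_{βY}(υY \ Y)`. -/
def hardCore (Y : Type*) [TopologicalSpace Y] : Set (StoneCech Y) :=
  Set.range (stoneCechUnit : Y → StoneCech Y) ∪
    closure (hewittSet Y \ Set.range (stoneCechUnit : Y → StoneCech Y))

/-- `H ⊆ Y` is hard in `Y` if it is closed in the subspace `Y ∪ cl_{βY}(υY \ Y)`. -/
def IsHard {Y : Type*} [TopologicalSpace Y] (H : Set Y) : Prop :=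
  IsClosed {p : hardCore Y | (p : StoneCech Y) ∈ stoneCechUnit '' H}

/-- `f` is bounded on every hard subset of `Y`, i.e. `f ∈ S(Y)`. -/
def HardBounded {Y : Type*} [TopologicalSpace Y] (f : C(Y, ℝ)) : Prop :=
  ∀ H : Set Y, IsHard H → ∃ M, ∀ x ∈ H, |f x| ≤ M

/-- A space is realcompact iff it coincides with its Hewitt realcompactification. -/
def IsRealcompact (Y : Type*) [TopologicalSpace Y] : Prop :=
  hewittSet Y ⊆ Set.range (stoneCechUnit : Y → StoneCech Y)

/-- `T` is `C*`-embedded in `X`. -/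
def CStarEmbedded {X : Type*} [TopologicalSpace X] (T : Set X) : Prop :=
  ∀ f : C(T, ℝ), (∃ M, ∀ x, |f x| ≤ M) → ∃ g : C(X, ℝ), ∀ x : T, g x = f x

/-- `T` is `S`-embedded in `X`: every hard-bounded continuous function on `T`
extends continuously to `X`. -/
def SEmbedded {X : Type*} [TopologicalSpace X] (T : Set X) : Prop :=
  ∀ f : C(T, ℝ), (∀ H : Set T, IsHard H → ∃ M, ∀ x ∈ H, |f x| ≤ M) →
    ∃ g : C(X, ℝ), ∀ x : T, g x = f x

/-- `A` and `B` are completely separated in `X`. -/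
def CompletelySeparatedIn (X : Type*) [TopologicalSpace X] (A B : Set X) : Prop :=
  ∃ h : C(X, ℝ), (∀ x ∈ A, h x = 1) ∧ (∀ x ∈ B, h x = 0) ∧ ∀ x, h x ∈ Set.Icc (0:ℝ) 1

/-- `g` is bounded away from zero on every hard subset of the subspace `T`. -/
def BddAwayOnHards {X : Type*} [TopologicalSpace X] (g : C(X, ℝ)) (T : Set X) : Prop :=
  ∀ H : Set T, IsHard H → ∃ m > 0, ∀ x ∈ H, m ≤ |g x.1|

/-- if a `C*`-embedded `T` is `S`-embedded, then `T` is completely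
separated from `Z(g)` for every `g` bounded away from zero on every hard subset of `T`. -/
theorem completelySeparated_of_sEmbedded (X : Type*) [TopologicalSpace X] [T35Space X]
    (T : Set X) (hC : CStarEmbedded T) (hS : SEmbedded T)
    (g : C(X, ℝ)) (hg : BddAwayOnHards g T) :
    CompletelySeparatedIn X T {x | g x = 0} := by
  -- Singletons in T are hard (StoneCech is T2), so g is nonzero on T.
  have hsingle : ∀ t0 : T, IsHard ({t0} : Set T) := by
    intro t0
    have : {p : hardCore T | (p : StoneCech T) ∈ stoneCechUnit '' ({t0} : Set T)}
        = (Subtype.val : hardCore T → StoneCech T) ⁻¹' {stoneCechUnit t0} := by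
      ext p; simp [Set.image_singleton]
    rw [IsHard, this]
    exact (isClosed_singleton).preimage continuous_subtype_val
  have hne : ∀ t0 : T, g t0.1 ≠ 0 := by
    intro t0
    obtain ⟨m, hm, hb⟩ := hg {t0} (hsingle t0)
    have := hb t0 rfl
    intro h0; rw [h0, abs_zero] at this; linarith
  -- f = 1/g on T
  have hcont : Continuous fun t : T => (g t.1)⁻¹ :=
    (g.continuous.comp continuous_subtype_val).inv₀ hne
  set f : C(T, ℝ) := ⟨fun t => (g t.1)⁻¹, hcont⟩ with hf
  have hfb : ∀ H : Set T, IsHard H → ∃ M, ∀ x ∈ H, |f x| ≤ M := by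
    intro H hH
    obtain ⟨m, hm, hb⟩ := hg H hH
    refine ⟨m⁻¹, fun x hx => ?_⟩
    have hgx := hb x hx
    have : |f x| = |g x.1|⁻¹ := by simp [hf, abs_inv]
    rw [this]
    exact inv_anti₀ hm hgx
  obtain ⟨h, hh⟩ := hS f hfb
  -- clamp g*h to [0,1]
  refine ⟨⟨fun x => max 0 (min 1 (g x * h x)),
    continuous_const.max (continuous_const.min (g.continuous.mul h.continuous))⟩,
    ?_, ?_, ?_⟩
  · intro x hx
    have : g x * h x = 1 := by
      have := hh ⟨x, hx⟩
      rw [this]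
      simp [hf]
      exact mul_inv_cancel₀ (hne ⟨x, hx⟩)
    simp [this]
  · intro x hx
    have : g x = 0 := hx
    simp [this]
  · intro x
    constructor
    · exact le_max_left _ _
    · exact max_le (by norm_num) (le_trans (min_le_left _ _) le_rfl)
end

section
/- Let T be a C*-embedded subset of a Tychonoff space X. If T is completely separated from every zero set Z(g) in X where g ∈ C(X) is bounded away from zero on every hard subset of T, then T is S-embedded in X. -/
open Set ContinuousMap

/-- a `C*`-embedded `T` completely separated from every `Z(g)` with `g`
bounded away from zero on every hard subset of `T` is `S`-embedded. -/
theorem sEmbedded_of_completelySeparated (X : Type*) [TopologicalSpace X] [T35Space X]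
    (T : Set X) (hC : CStarEmbedded T)
    (hsep : ∀ g : C(X, ℝ), BddAwayOnHards g T → CompletelySeparatedIn X T {x | g x = 0}) :
    SEmbedded T := by

  intro f hb
  have hpos : ∀ x : T, (0:ℝ) < 1 + |f x| := fun x => by positivity
  have hcont : Continuous fun x : T => 1 + |f x| :=
    continuous_const.add (continuous_abs.comp f.continuous)
  set k : C(T, ℝ) := ⟨fun x => f x / (1 + |f x|),
    f.continuous.div hcont fun x => (hpos x).ne'⟩ with hkdef
  set l : C(T, ℝ) := ⟨fun x => 1 / (1 + |f x|),
    continuous_const.div hcont fun x => (hpos x).ne'⟩ with hldef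
  obtain ⟨kt, hkt⟩ := hC k ⟨1, fun x => by
    simp only [hkdef, ContinuousMap.coe_mk]
    rw [abs_div, abs_of_pos (hpos x)]
    exact (div_le_one (hpos x)).mpr (le_add_of_nonneg_left zero_le_one)⟩
  obtain ⟨lt, hlt⟩ := hC l ⟨1, fun x => by
    simp only [hldef, ContinuousMap.coe_mk]
    rw [abs_of_pos (by positivity)]
    exact (div_le_one (hpos x)).mpr (le_add_of_nonneg_right (abs_nonneg _))⟩
  have hbdd : BddAwayOnHards lt T := by
    intro H hH
    obtain ⟨M, hM⟩ := hb H hH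
    refine ⟨1 / (1 + max M 0), by positivity, fun x hx => ?_⟩
    rw [hlt x]
    have h1 : |f x| ≤ max M 0 := le_trans (hM x hx) (le_max_left _ _)
    have : (l x : ℝ) = 1 / (1 + |f x|) := rfl
    rw [this, abs_of_pos (by positivity)]
    apply one_div_le_one_div_of_le (hpos x)
    linarith
  obtain ⟨u, hu1, hu0, hu01⟩ := hsep lt hbdd
  set d : C(X, ℝ) := ⟨fun x => |lt x| + (1 - u x),
    (continuous_abs.comp lt.continuous).add (continuous_const.sub u.continuous)⟩ with hddef
  have hd : ∀ x, 0 < d x := by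
    intro x
    by_cases h : lt x = 0
    · have h0 : u x = 0 := hu0 x h
      simp [hddef, h, h0]
    · have h1 : 0 < |lt x| := abs_pos.mpr h
      have h2 : u x ≤ 1 := (hu01 x).2
      simp only [hddef, ContinuousMap.coe_mk]
      linarith
  refine ⟨⟨fun x => kt x * u x / d x,
    (kt.continuous.mul u.continuous).div d.continuous fun x => (hd x).ne'⟩, fun x => ?_⟩
  have e1 : kt x = f x / (1 + |f x|) := hkt x
  have e2 : lt x = 1 / (1 + |f x|) := hlt x
  have e3 : u x = 1 := hu1 x x.2
  show kt x * u x / d x = f x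
  have e4 : d x = 1 / (1 + |f x|) := by
    simp only [hddef, ContinuousMap.coe_mk, e2, e3]
    rw [abs_of_pos (by positivity)]
    ring
  rw [e1, e3, e4]
  field_simp
end

section
/- Let f be a continuous real-valued function on a Tychonoff space X that is bounded on every hard subset of X. Then f is bounded on every realcompact cozero set in X. -/
open Set ContinuousMap

open Set ContinuousMap Topology Filter unitInterval

section AuxLemmas

variable {Y : Type*} [TopologicalSpace Y]

instance Subtype.instCompletelyRegularSpace [CompletelyRegularSpace Y] (s : Set Y) :
    CompletelyRegularSpace s := by
  constructor
  intro x K hK hx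
  obtain ⟨C, hC, hCK⟩ := isClosed_induced_iff.mp hK
  have hxC : (x : Y) ∉ C := fun h => hx (by rw [← hCK]; exact h)
  obtain ⟨φ, hφc, hφ0, hφ1⟩ := CompletelyRegularSpace.completely_regular (x : Y) C hC hxC
  exact ⟨fun y => φ y, hφc.comp continuous_subtype_val, hφ0,
    fun k hk => hφ1 (by rw [← hCK] at hk; exact hk)⟩

instance Subtype.instT35Space [T35Space Y] (s : Set Y) : T35Space s := {}

/-- In a T3.5 space, open neighbourhoods in `Y` can be realized from open sets of `βY`. -/
lemma exists_open_stoneCech_of_isOpen [T35Space Y] {W : Set Y} (hW : IsOpen W) {y0 : Y}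
    (hy : y0 ∈ W) : ∃ O : Set (StoneCech Y), IsOpen O ∧ stoneCechUnit y0 ∈ O ∧
      ∀ y : Y, stoneCechUnit y ∈ O → y ∈ W := by
  obtain ⟨φ, hφc, hφ0, hφ1⟩ := CompletelyRegularSpace.completely_regular y0 Wᶜ
    hW.isClosed_compl (by simpa using hy)
  refine ⟨(fun z => ((stoneCechExtend hφc z : I) : ℝ)) ⁻¹' Iio (1/2),
    isOpen_Iio.preimage (continuous_subtype_val.comp (continuous_stoneCechExtend hφc)), ?_, ?_⟩
  · have h1 : stoneCechExtend hφc (stoneCechUnit y0) = φ y0 :=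
      congr_fun (stoneCechExtend_extends hφc) y0
    simp only [Set.mem_preimage, Set.mem_Iio, h1, hφ0]
    norm_num
  · intro y hy'
    by_contra hyW
    have h1 : stoneCechExtend hφc (stoneCechUnit y) = φ y :=
      congr_fun (stoneCechExtend_extends hφc) y
    have h2 : φ y = 1 := hφ1 hyW
    simp only [Set.mem_preimage, Set.mem_Iio, h1, h2] at hy'
    norm_num at hy'

lemma isClosed_range_of_abs_lt {Z : Type*} [TopologicalSpace Z] [T1Space Z] {φ : Z → ℝ}
    (hφ : Continuous φ) (dd : ℕ → Z) (h1 : ∀ k : ℕ, (k : ℝ) < |φ (dd k)|) :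
    IsClosed (Set.range dd) := by
  rw [← closure_subset_iff_isClosed]
  intro y hy
  set B : Set Z := (fun z => |φ z - φ y|) ⁻¹' Iio 1 with hBdef
  have hB : IsOpen B := isOpen_Iio.preimage ((hφ.sub continuous_const).abs)
  have hyB : y ∈ B := by simp [hBdef]
  have h2 : y ∈ closure (B ∩ Set.range dd) := hB.inter_closure ⟨hyB, hy⟩
  set N : ℕ := ⌈|φ y|⌉₊ + 2 with hNdef
  have hsub : B ∩ Set.range dd ⊆ dd '' {k | k < N} := by
    rintro _ ⟨hB', k, rfl⟩
    refine ⟨k, ?_, rfl⟩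
    have hk1 : |φ (dd k)| ≤ |φ (dd k) - φ y| + |φ y| := by
      have := abs_sub_abs_le_abs_sub (φ (dd k)) (φ y); linarith [abs_nonneg (φ y)]
    have hk2 : (k : ℝ) < |φ y| + 1 := by
      have hB'' : |φ (dd k) - φ y| < 1 := hB'
      calc (k:ℝ) < |φ (dd k)| := h1 k
        _ ≤ |φ (dd k) - φ y| + |φ y| := hk1
        _ < |φ y| + 1 := by linarith
    have hk3 : (k : ℝ) < (N : ℝ) := by
      calc (k:ℝ) < |φ y| + 1 := hk2
        _ ≤ (⌈|φ y|⌉₊ : ℝ) + 1 := by linarith [Nat.le_ceil |φ y|]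
        _ < (N : ℝ) := by rw [hNdef]; push_cast; linarith
    exact_mod_cast hk3
  have hfin : ({k : ℕ | k < N}).Finite := Set.finite_Iio N
  have h3 : y ∈ dd '' {k | k < N} :=
    (closure_minimal hsub (hfin.image dd).isClosed) h2
  obtain ⟨k, -, rfl⟩ := h3
  exact Set.mem_range_self k

/-- Gluing lemma: a function on `Y` with a limit `r` at `p ∈ βY \ Y` extends to `Y ∪ {p}`. -/
lemma glue_extension [T35Space Y] (h : C(Y, ℝ)) (p : StoneCech Y)
    (hp : p ∉ Set.range (stoneCechUnit : Y → StoneCech Y)) (r : ℝ)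
    (hr : ∀ ε : ℝ, 0 < ε → ∃ U : Set (StoneCech Y), IsOpen U ∧ p ∈ U ∧
      ∀ y : Y, stoneCechUnit y ∈ U → |h y - r| < ε) :
    ∃ g : C((Set.range (stoneCechUnit : Y → StoneCech Y) ∪ {p} : Set (StoneCech Y)), ℝ),
      ∀ x : Y, g ⟨stoneCechUnit x, Or.inl ⟨x, rfl⟩⟩ = h x := by
  classical
  set S : Set (StoneCech Y) := Set.range (stoneCechUnit : Y → StoneCech Y) ∪ {p} with hSdef
  set g0 : S → ℝ := fun z =>
    if hz : ∃ y : Y, stoneCechUnit y = (z : StoneCech Y) then h hz.choose else r with hg0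
  have hval : ∀ (y : Y) (z : S), (z : StoneCech Y) = stoneCechUnit y → g0 z = h y := by
    intro y z hz
    have hex : ∃ y' : Y, stoneCechUnit y' = (z : StoneCech Y) := ⟨y, hz.symm⟩
    have hch : hex.choose = y := injective_stoneCechUnit_of_t35Space (by rw [hex.choose_spec, hz])
    rw [hg0]
    simp only [dif_pos hex, hch]
  have hvalp : ∀ z : S, (z : StoneCech Y) = p → g0 z = r := by
    intro z hz
    have hne : ¬ ∃ y : Y, stoneCechUnit y = (z : StoneCech Y) := by
      rintro ⟨y, hy⟩
      exact hp ⟨y, by rw [hy, hz]⟩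
    rw [hg0]; simp only [dif_neg hne]
  have hcont : Continuous g0 := by
    rw [continuous_iff_continuousAt]
    intro z
    rcases z.2 with hz | hz
    · -- z.1 in the range
      obtain ⟨y0, hy0⟩ := hz
      have hgz : g0 z = h y0 := hval y0 z hy0.symm
      rw [ContinuousAt, Metric.tendsto_nhds]
      intro ε hε
      have hWopen : IsOpen {y : Y | |h y - h y0| < ε} :=
        isOpen_Iio.preimage ((h.continuous.sub continuous_const).abs)
      have hy0W : y0 ∈ {y : Y | |h y - h y0| < ε} := by simp [hε]
      obtain ⟨O, hOo, hO1, hO2⟩ := exists_open_stoneCech_of_isOpen hWopen hy0W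
      have hzp : (z : StoneCech Y) ≠ p := by
        rw [← hy0]; exact fun hh => hp ⟨y0, hh⟩
      obtain ⟨O1, O2, hO1o, hO2o, hzO1, hpO2, hdisj⟩ := t2_separation hzp
      have hmem : (Subtype.val ⁻¹' (O ∩ O1) : Set S) ∈ 𝓝 z :=
        ((hOo.inter hO1o).preimage continuous_subtype_val).mem_nhds
          (Set.mem_preimage.mpr ⟨hy0 ▸ hO1, hzO1⟩)
      filter_upwards [hmem] with w hw
      rcases w.2 with hw2 | hw2
      · obtain ⟨y, hy⟩ := hw2
        have hgw : g0 w = h y := hval y w hy.symm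
        have hyW : y ∈ {y : Y | |h y - h y0| < ε} := hO2 y (by rw [hy]; exact hw.1)
        rw [Real.dist_eq, hgw, hgz]
        exact hyW
      · exfalso
        have : (w : StoneCech Y) = p := hw2
        exact Set.disjoint_left.mp hdisj (this ▸ hw.2) hpO2
    · -- z.1 = p
      have hzp : (z : StoneCech Y) = p := hz
      have hgz : g0 z = r := hvalp z hzp
      rw [ContinuousAt, Metric.tendsto_nhds]
      intro ε hε
      obtain ⟨U, hUo, hpU, hU⟩ := hr ε hε
      have hmem : (Subtype.val ⁻¹' U : Set S) ∈ 𝓝 z :=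
        (hUo.preimage continuous_subtype_val).mem_nhds (by rw [Set.mem_preimage, hzp]; exact hpU)
      filter_upwards [hmem] with w hw
      rcases w.2 with hw2 | hw2
      · obtain ⟨y, hy⟩ := hw2
        have hgw : g0 w = h y := hval y w hy.symm
        rw [Real.dist_eq, hgw, hgz]
        exact hU y (by rw [hy]; exact hw)
      · have hgw : g0 w = r := hvalp w hw2
        rw [Real.dist_eq, hgw, hgz]
        simpa using hε
  exact ⟨⟨g0, hcont⟩, fun x => hval x _ rfl⟩

end AuxLemmas

/-- a hard-bounded function is bounded on every realcompact cozero set. -/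
theorem bounded_on_realcompact_cozero_of_hardBounded (X : Type*) [TopologicalSpace X]
    [T35Space X] (f : C(X, ℝ)) (hf : HardBounded f) :
    ∀ P : Set X, (∃ g : C(X, ℝ), P = {x | g x ≠ 0}) → IsRealcompact P →
      ∃ M, ∀ x ∈ P, |f x| ≤ M := by
  classical
  rintro P ⟨g, rfl⟩ hrc
  by_contra hbd
  push_neg at hbd
  have hpick : ∀ M : ℝ, ∃ x : X, g x ≠ 0 ∧ M < |f x| := by
    intro M; obtain ⟨x, hx1, hx2⟩ := hbd M; exact ⟨x, hx1, hx2⟩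
  choose c hc1 hc2 using hpick
  set d : ℕ → X := fun k => Nat.rec (c 0) (fun _ xk => c (|f xk| + 1)) k with hd
  have hds : ∀ k, d (k + 1) = c (|f (d k)| + 1) := fun k => rfl
  have hdP : ∀ k, g (d k) ≠ 0 := by
    intro k
    cases k with
    | zero => exact hc1 0
    | succ n => rw [hds n]; exact hc1 _
  have hgap : ∀ k, |f (d k)| + 1 < |f (d (k + 1))| := by
    intro k; rw [hds k]; exact hc2 _
  have hlow : ∀ k : ℕ, (k : ℝ) < |f (d k)| := by
    intro k; induction k with
    | zero => exact_mod_cast hc2 0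
    | succ n ih => push_cast; linarith [hgap n]
  have hmono : ∀ j k : ℕ, j < k → |f (d j)| + 1 ≤ |f (d k)| := by
    intro j k hjk
    induction k with
    | zero => omega
    | succ n ih =>
      rcases Nat.lt_succ_iff_lt_or_eq.mp hjk with hcase | hcase
      · linarith [ih hcase, hgap n]
      · subst hcase; linarith [hgap j]
  have hinj : ∀ j k : ℕ, j ≠ k → 1 ≤ |f (d j) - f (d k)| := by
    have key : ∀ j k : ℕ, j < k → 1 ≤ |f (d j) - f (d k)| := by
      intro j k hlt
      have h1 := hmono j k hlt
      have h2 : |f (d k)| - |f (d j)| ≤ |f (d k) - f (d j)| := abs_sub_abs_le_abs_sub _ _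
      rw [abs_sub_comm] at h2
      linarith
    intro j k hne
    rcases hne.lt_or_gt with h' | h'
    · exact key j k h'
    · rw [abs_sub_comm]; exact key k j h'
  have hainj : ∀ j k : ℕ, f (d j) = f (d k) → j = k := by
    intro j k hjk
    by_contra hne
    have h1 := hinj j k hne
    rw [hjk, sub_self, abs_zero] at h1
    linarith
  -- closedness of the discrete sequence and of its value set
  have hDclosed : IsClosed (Set.range d) := isClosed_range_of_abs_lt f.continuous d hlow
  have hAclosed : IsClosed (Set.range fun k => f (d k)) :=
    isClosed_range_of_abs_lt continuous_id (fun k => f (d k)) (by intro k; simpa using hlow k)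
  -- interpolating function on the (closed discrete) value set
  set V : (Set.range fun k => f (d k)) → ℝ := fun z => |g (d (z.2.choose))|⁻¹ with hV
  have hVval : ∀ (k : ℕ) (hk : f (d k) ∈ Set.range fun j => f (d j)),
      V ⟨f (d k), hk⟩ = |g (d k)|⁻¹ := by
    intro k hk
    have h1 : f (d hk.choose) = f (d k) := hk.choose_spec
    have h2 : hk.choose = k := hainj _ _ h1
    show |g (d ((hk : f (d k) ∈ Set.range fun j => f (d j)).choose))|⁻¹ = |g (d k)|⁻¹
    rw [h2]
  have hVcont : Continuous V := by
    rw [continuous_iff_continuousAt]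
    intro z
    have hsing : (Subtype.val ⁻¹' (Metric.ball (z : ℝ) 1) :
        Set (Set.range fun k => f (d k))) ⊆ {z} := by
      rintro w hw
      obtain ⟨j, hj⟩ := w.2
      obtain ⟨k, hk⟩ := z.2
      have hdist : |f (d j) - f (d k)| < 1 := by
        have hd' : dist (w : ℝ) (z : ℝ) < 1 := hw
        rw [Real.dist_eq, ← hj, ← hk] at hd'
        exact hd'
      have hjkeq : j = k := by
        by_contra hne
        exact absurd hdist (not_lt.mpr (hinj j k hne))
      have : (w : ℝ) = (z : ℝ) := by rw [← hj, ← hk, hjkeq]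
      exact Set.mem_singleton_iff.mpr (Subtype.ext this)
    have hmem : ({z} : Set (Set.range fun k => f (d k))) ∈ 𝓝 z :=
      Filter.mem_of_superset
        ((Metric.isOpen_ball.preimage continuous_subtype_val).mem_nhds
          (by simp [Metric.mem_ball])) hsing
    have heq : ∀ᶠ w in 𝓝 z, V w = V z :=
      Filter.eventually_of_mem hmem (fun w hw => by rw [Set.mem_singleton_iff.mp hw])
    rw [ContinuousAt]
    exact Filter.Tendsto.congr' (heq.mono fun w hw => hw.symm) tendsto_const_nhds
  obtain ⟨t, ht⟩ := ContinuousMap.exists_restrict_eq hAclosed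
    (⟨V, hVcont⟩ : C((Set.range fun k => f (d k)), ℝ))
  have htval : ∀ k : ℕ, t (f (d k)) = |g (d k)|⁻¹ := by
    intro k
    have h1 := ContinuousMap.congr_fun ht ⟨f (d k), ⟨k, rfl⟩⟩
    rw [ContinuousMap.restrict_apply] at h1
    rw [h1]
    exact hVval k ⟨k, rfl⟩
  -- the separating function u
  set u : X → ℝ := fun x => max 0 (min 1 (|g x| * t (f x))) with hu
  have hucont : Continuous u :=
    continuous_const.max (continuous_const.min
      ((g.continuous.abs).mul (t.continuous.comp f.continuous)))
  have hu0 : ∀ x, 0 ≤ u x := fun x => le_max_left _ _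
  have hu1 : ∀ x, u x ≤ 1 := fun x => max_le zero_le_one (min_le_left _ _)
  have huD : ∀ k, u (d k) = 1 := by
    intro k
    have hg0 : |g (d k)| ≠ 0 := abs_ne_zero.mpr (hdP k)
    show max 0 (min 1 (|g (d k)| * t (f (d k)))) = 1
    rw [htval k, mul_inv_cancel₀ hg0]
    norm_num
  have huP : ∀ x, g x = 0 → u x = 0 := by
    intro x hx
    show max 0 (min 1 (|g x| * t (f x))) = 0
    rw [hx]
    simp
  have huPos : ∀ x, 0 < u x → g x ≠ 0 := by
    intro x hx hgx
    rw [huP x hgx] at hx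
    exact lt_irrefl 0 hx
  -- the Stone–Čech extension of u
  set uI : X → I := fun x => ⟨u x, hu0 x, hu1 x⟩ with huI
  have huIc : Continuous uI := hucont.subtype_mk _
  set U : StoneCech X → ℝ := fun z => ((stoneCechExtend huIc z : I) : ℝ) with hU
  have hUcont : Continuous U := continuous_subtype_val.comp (continuous_stoneCechExtend huIc)
  have hUunit : ∀ x, U (stoneCechUnit x) = u x := by
    intro x
    show ((stoneCechExtend huIc (stoneCechUnit x) : I) : ℝ) = u x
    have hx := congr_fun (stoneCechExtend_extends huIc) x
    simp only [Function.comp_apply] at hx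
    rw [hx]
  -- auxiliary cutoff
  set ψ : X → ℝ := fun x => min 1 (max 0 (8 * u x - 5)) with hψ
  have hψcont : Continuous ψ :=
    continuous_const.min (continuous_const.max
      ((continuous_const.mul hucont).sub continuous_const))
  have hψ1 : ∀ x, 3/4 < u x → ψ x = 1 := by
    intro x hx
    show min 1 (max 0 (8 * u x - 5)) = 1
    have h1 : (1:ℝ) ≤ 8 * u x - 5 := by linarith
    exact min_eq_left (h1.trans (le_max_right 0 _))
  have hψ0 : ∀ x, u x ≤ 5/8 → ψ x = 0 := by
    intro x hx
    show min 1 (max 0 (8 * u x - 5)) = 0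
    have h1 : max 0 (8 * u x - 5) = 0 := max_eq_left (by linarith)
    rw [h1]
    simp
  have hPopen : IsOpen {x : X | g x ≠ 0} := isOpen_ne.preimage g.continuous
  have hOopen : IsOpen (U ⁻¹' Set.Ioi (3/4)) := isOpen_Ioi.preimage hUcont
  -- the key claim
  have hclaim : ∀ q : StoneCech X, 3/4 < U q → q ∈ hewittSet X →
      q ∈ Set.range (stoneCechUnit : X → StoneCech X) := by
    intro q hqO hqh
    by_contra hqr
    have hι : Continuous (fun y : {x : X | g x ≠ 0} => stoneCechUnit (y : X)) :=
      continuous_stoneCechUnit.comp continuous_subtype_val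
    have hβιnat : ∀ y : {x : X | g x ≠ 0},
        stoneCechExtend hι (stoneCechUnit y) = stoneCechUnit (y : X) := by
      intro y
      exact congr_fun (stoneCechExtend_extends hι) y
    have hq1 : q ∈ closure ((U ⁻¹' Set.Ioi (3/4)) ∩ Set.range stoneCechUnit) := by
      apply hOopen.inter_closure
      refine ⟨hqO, ?_⟩
      rw [denseRange_stoneCechUnit.closure_range]
      trivial
    have hq2 : q ∈ Set.range (stoneCechExtend hι) := by
      have hclosed : IsClosed (Set.range (stoneCechExtend hι)) :=
        (isCompact_range (continuous_stoneCechExtend hι)).isClosed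
      have hsub2 : (U ⁻¹' Set.Ioi (3/4)) ∩ Set.range stoneCechUnit ⊆
          Set.range (stoneCechExtend hι) := by
        rintro _ ⟨hz1, x, rfl⟩
        have hux : 3/4 < u x := by rw [← hUunit x]; exact hz1
        have hgx : g x ≠ 0 := huPos x (by linarith)
        exact ⟨stoneCechUnit (⟨x, hgx⟩ : {x : X | g x ≠ 0}), hβιnat _⟩
      exact (closure_minimal hsub2 hclosed) hq1
    obtain ⟨q', hq'⟩ := hq2
    have hq'r : q' ∉ Set.range (stoneCechUnit :
        {x : X | g x ≠ 0} → StoneCech {x : X | g x ≠ 0}) := by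
      rintro ⟨y, rfl⟩
      exact hqr ⟨y, by rw [← hq', hβιnat]⟩
    have hq'hewitt : q' ∈ hewittSet {x : X | g x ≠ 0} := by
      intro h
      set F : X → ℝ := fun x => (if hx : g x ≠ 0 then h ⟨x, hx⟩ else 0) * ψ x with hF
      have hFP : ∀ (x : X) (hx : g x ≠ 0), F x = h ⟨x, hx⟩ * ψ x := by
        intro x hx
        show (if hx' : g x ≠ 0 then h ⟨x, hx'⟩ else 0) * ψ x = h ⟨x, hx⟩ * ψ x
        rw [dif_pos hx]
      have hFcont : Continuous F := by
        rw [continuous_iff_continuousAt]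
        intro x
        by_cases hx : g x ≠ 0
        · apply ContinuousOn.continuousAt _ (hPopen.mem_nhds hx)
          rw [continuousOn_iff_continuous_restrict]
          have hre : Set.restrict {x : X | g x ≠ 0} F =
              fun y : {x : X | g x ≠ 0} => h y * ψ (y : X) := by
            funext y
            show F y = h y * ψ (y : X); rw [hFP _ y.2]
          refine (congrArg Continuous hre).mpr ?_
          exact h.continuous.mul (hψcont.comp continuous_subtype_val)
        · push_neg at hx
          have hnbhd : {y : X | u y < 5/8} ∈ 𝓝 x :=
            (isOpen_Iio.preimage hucont).mem_nhds (by
              show u x < 5/8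
              rw [huP x hx]; norm_num)
          have heq : ∀ᶠ y in 𝓝 x, F y = 0 :=
            Filter.eventually_of_mem hnbhd (fun y hy => by
              have : ψ y = 0 := hψ0 y (le_of_lt hy)
              show (if hy' : g y ≠ 0 then h ⟨y, hy'⟩ else 0) * ψ y = 0
              rw [this, mul_zero])
          have hFx : F x = 0 := by
            have : ψ x = 0 := hψ0 x (by rw [huP x hx]; norm_num)
            show (if hx' : g x ≠ 0 then h ⟨x, hx'⟩ else 0) * ψ x = 0
            rw [this, mul_zero]
          rw [ContinuousAt, hFx]
          exact Filter.Tendsto.congr' (heq.mono fun y hy => hy.symm) tendsto_const_nhds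
      obtain ⟨G, hG⟩ := hqh ⟨F, hFcont⟩
      set r : ℝ := G ⟨q, Or.inr rfl⟩ with hrdef
      have hGr : ∀ ε : ℝ, 0 < ε → ∃ T : Set (StoneCech X), IsOpen T ∧ q ∈ T ∧
          ∀ x : X, stoneCechUnit x ∈ T → |F x - r| < ε := by
        intro ε hε
        have hGc : ContinuousAt G ⟨q, Or.inr rfl⟩ := G.continuous.continuousAt
        rw [ContinuousAt, Metric.tendsto_nhds] at hGc
        have hGc2 := hGc ε hε
        rw [nhds_subtype] at hGc2
        have hGc3 : {w : ↥(Set.range (stoneCechUnit : X → StoneCech X) ∪ {q}) |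
            dist (G w) r < ε} ∈ Filter.comap Subtype.val (𝓝 q) := hGc2
        obtain ⟨T', hT'mem, hT'⟩ := Filter.mem_comap.mp hGc3
        obtain ⟨T, hTsub, hTopen, hqT⟩ := mem_nhds_iff.mp hT'mem
        refine ⟨T, hTopen, hqT, ?_⟩
        intro x hxT
        have hmem2 : (⟨stoneCechUnit x, Or.inl ⟨x, rfl⟩⟩ :
            ↥(Set.range (stoneCechUnit : X → StoneCech X) ∪ {q})) ∈
            Subtype.val ⁻¹' T' := hTsub hxT
        have hd2 := hT' hmem2
        have hd3 : dist (G ⟨stoneCechUnit x, Or.inl ⟨x, rfl⟩⟩) r < ε := hd2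
        rw [Real.dist_eq, hG x] at hd3
        exact hd3
      have hhyp : ∀ ε : ℝ, 0 < ε → ∃ U' : Set (StoneCech {x : X | g x ≠ 0}),
          IsOpen U' ∧ q' ∈ U' ∧ ∀ y : {x : X | g x ≠ 0},
            stoneCechUnit y ∈ U' → |h y - r| < ε := by
        intro ε hε
        obtain ⟨T, hTopen, hqT, hT⟩ := hGr ε hε
        refine ⟨stoneCechExtend hι ⁻¹' (T ∩ U ⁻¹' Set.Ioi (3/4)),
          (hTopen.inter hOopen).preimage (continuous_stoneCechExtend hι), ?_, ?_⟩
        · rw [Set.mem_preimage, hq']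
          exact ⟨hqT, hqO⟩
        · intro y hy
          rw [Set.mem_preimage, hβιnat y] at hy
          have h34 : 3/4 < u (y : X) := by rw [← hUunit]; exact hy.2
          have hψy : ψ (y : X) = 1 := hψ1 _ h34
          have hFy : F (y : X) = h y := by
            rw [hFP _ y.2, hψy, mul_one]
          have hineq := hT (y : X) hy.1
          rw [hFy] at hineq
          exact hineq
      exact glue_extension h q' hq'r r hhyp
    exact hq'r (hrc hq'hewitt)
  -- the sequence set is hard
  have hDhard : IsHard (Set.range d) := by
    have hkey : closure (stoneCechUnit '' Set.range d) ∩ hardCore X ⊆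
        stoneCechUnit '' Set.range d := by
      rintro z ⟨hzcl, hzhc⟩
      by_cases hzr : z ∈ Set.range (stoneCechUnit : X → StoneCech X)
      · obtain ⟨y, rfl⟩ := hzr
        by_cases hyD : y ∈ Set.range d
        · exact ⟨y, hyD, rfl⟩
        · exfalso
          obtain ⟨φ, hφc, hφ0, hφ1⟩ :=
            CompletelyRegularSpace.completely_regular y (Set.range d) hDclosed hyD
          set Φ : StoneCech X → ℝ := fun w => ((stoneCechExtend hφc w : I) : ℝ) with hΦ
          have hΦc : Continuous Φ := continuous_subtype_val.comp (continuous_stoneCechExtend hφc)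
          have hΦone : stoneCechUnit '' Set.range d ⊆ {w | Φ w = 1} := by
            rintro _ ⟨x, hx, rfl⟩
            show ((stoneCechExtend hφc (stoneCechUnit x) : I) : ℝ) = 1
            have hx2 := congr_fun (stoneCechExtend_extends hφc) x
            simp only [Function.comp_apply] at hx2
            rw [hx2, hφ1 hx]
            rfl
          have hone : Φ (stoneCechUnit y) = 1 :=
            closure_minimal hΦone (isClosed_eq hΦc continuous_const) hzcl
          have hzero : Φ (stoneCechUnit y) = 0 := by
            show ((stoneCechExtend hφc (stoneCechUnit y) : I) : ℝ) = 0
            have hy2 := congr_fun (stoneCechExtend_extends hφc) y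
            simp only [Function.comp_apply] at hy2
            rw [hy2, hφ0]
            rfl
          rw [hzero] at hone
          norm_num at hone
      · exfalso
        have hzcl2 : z ∈ closure (hewittSet X \ Set.range stoneCechUnit) := by
          rcases hzhc with hcase | hcase
          · exact absurd hcase hzr
          · exact hcase
        have hUz : U z = 1 := by
          have hsub : stoneCechUnit '' Set.range d ⊆ {w | U w = 1} := by
            rintro _ ⟨x, ⟨k, rfl⟩, rfl⟩
            show U (stoneCechUnit (d k)) = 1
            rw [hUunit, huD]
          exact closure_minimal hsub (isClosed_eq hUcont continuous_const) hzcl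
        have hzO : z ∈ U ⁻¹' Set.Ioi (3/4) := by
          rw [Set.mem_preimage, hUz]
          norm_num
        have hempty : (U ⁻¹' Set.Ioi (3/4)) ∩ (hewittSet X \ Set.range stoneCechUnit) = ∅ := by
          ext w
          simp only [Set.mem_inter_iff, Set.mem_empty_iff_false, iff_false, not_and]
          intro hw1 hw2
          exact absurd (hclaim w hw1 hw2.1) hw2.2
        have hfin := hOopen.inter_closure ⟨hzO, hzcl2⟩
        rw [hempty, closure_empty] at hfin
        exact hfin
    have hseteq : {p : ↥(hardCore X) | (p : StoneCech X) ∈ stoneCechUnit '' Set.range d} =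
        Subtype.val ⁻¹' closure (stoneCechUnit '' Set.range d) := by
      ext p
      constructor
      · intro hp
        exact subset_closure hp
      · intro hp
        exact hkey ⟨hp, p.2⟩
    rw [IsHard, hseteq]
    exact isClosed_closure.preimage continuous_subtype_val
  obtain ⟨M, hM⟩ := hf (Set.range d) hDhard
  have h1 := hM (d ⌈M⌉₊) ⟨⌈M⌉₊, rfl⟩
  have h2 := hlow ⌈M⌉₊
  have h3 := Nat.le_ceil M
  linarith
end

section
/- Let f be a continuous real-valued function on a Tychonoff space X that is bounded on every realcompact cozero set of X. Then f is bounded on every hard subset of X. -/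
open Set ContinuousMap

open unitInterval

section AuxHelpers

variable {X : Type*} [TopologicalSpace X]

lemma exists_beta_extension (k : X → ℝ) (hk : Continuous k) (c : ℝ)
    (hc : ∀ x, k x ∈ Icc (-c) c) :
    ∃ K : StoneCech X → ℝ, Continuous K ∧ ∀ x, K (stoneCechUnit x) = k x := by
  haveI : CompactSpace (Icc (-c) c) := isCompact_iff_compactSpace.mp isCompact_Icc
  have hk' : Continuous (fun x => (⟨k x, hc x⟩ : Icc (-c) c)) := hk.subtype_mk hc
  let K0 : StoneCech X → Icc (-c) c := stoneCechExtend hk'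
  refine ⟨fun y => (K0 y : ℝ),
    continuous_subtype_val.comp (continuous_stoneCechExtend hk'), fun x => ?_⟩
  show ((stoneCechExtend hk' (stoneCechUnit x) : Icc (-c) c) : ℝ) = k x
  have h := congrFun (stoneCechExtend_extends hk') x
  rw [Function.comp_apply] at h
  rw [h]

lemma dense_unitPart (p : StoneCech X) :
    Dense {y : ↥(range (stoneCechUnit : X → StoneCech X) ∪ {p}) |
      (y : StoneCech X) ∈ range (stoneCechUnit : X → StoneCech X)} := by
  intro y
  rw [closure_subtype]
  have h1 : range (stoneCechUnit : X → StoneCech X) ⊆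
      Subtype.val '' {y : ↥(range (stoneCechUnit : X → StoneCech X) ∪ {p}) |
        (y : StoneCech X) ∈ range (stoneCechUnit : X → StoneCech X)} := by
    rintro z hz
    exact ⟨⟨z, Or.inl hz⟩, hz, rfl⟩
  have h2 := closure_mono h1
  rw [denseRange_stoneCechUnit.closure_eq] at h2
  exact h2 (mem_univ _)

lemma hewitt_inv_ne_zero {q : StoneCech X}
    (hq : q ∈ hewittSet X) (w : C(X, ℝ)) (hw : ∀ y, w y ≠ 0)
    (B : StoneCech X → ℝ) (cB : Continuous B)
    (hB : ∀ y, B (stoneCechUnit y) = (w y)⁻¹) : B q ≠ 0 := by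
  obtain ⟨g, hg⟩ := hq w
  have hone : (fun y : ↥(range (stoneCechUnit : X → StoneCech X) ∪ {q}) => g y * B ↑y)
      = fun _ => (1 : ℝ) := by
    refine Continuous.ext_on (dense_unitPart q)
      (g.continuous.mul (cB.comp continuous_subtype_val)) continuous_const ?_
    rintro y ⟨x, hx⟩
    have hy : y = ⟨stoneCechUnit x, Or.inl ⟨x, rfl⟩⟩ := Subtype.ext hx.symm
    rw [hy]
    show g ⟨stoneCechUnit x, Or.inl ⟨x, rfl⟩⟩ * B (stoneCechUnit x) = 1
    rw [hg x, hB x]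
    exact mul_inv_cancel₀ (hw x)
  have h2 := congrFun hone ⟨q, Or.inr rfl⟩
  simp only at h2
  intro h0
  rw [h0, mul_zero] at h2
  exact zero_ne_one h2

lemma exists_KA (f : C(X, ℝ)) :
    ∃ K A : StoneCech X → ℝ, Continuous K ∧ Continuous A ∧
      (∀ x, K (stoneCechUnit x) = (1 + f x ^ 2)⁻¹) ∧
      (∀ x, A (stoneCechUnit x) = f x * (1 + f x ^ 2)⁻¹) := by
  have hpos : ∀ x : X, (0:ℝ) < 1 + f x ^ 2 := fun x => by positivity
  have hkc : Continuous fun x => (1 + f x ^ 2)⁻¹ :=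
    (continuous_const.add (f.continuous.pow 2)).inv₀ fun x => ne_of_gt (hpos x)
  have hac : Continuous fun x => f x * (1 + f x ^ 2)⁻¹ := f.continuous.mul hkc
  have hinvpos : ∀ x : X, (0:ℝ) < (1 + f x ^ 2)⁻¹ := fun x => inv_pos.mpr (hpos x)
  have hkm : ∀ x, (1 + f x ^ 2)⁻¹ ∈ Icc (-1:ℝ) 1 := by
    intro x
    have h1 : (0:ℝ) ≤ (1 + f x ^ 2 - 1) * (1 + f x ^ 2)⁻¹ :=
      mul_nonneg (by nlinarith [sq_nonneg (f x)]) (hinvpos x).le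
    rw [sub_mul, mul_inv_cancel₀ (hpos x).ne'] at h1
    constructor
    · linarith [hinvpos x]
    · linarith
  have ham : ∀ x, f x * (1 + f x ^ 2)⁻¹ ∈ Icc (-1:ℝ) 1 := by
    intro x
    have h1 : (0:ℝ) ≤ (f x + (1 + f x ^ 2)) * (1 + f x ^ 2)⁻¹ :=
      mul_nonneg (by nlinarith [sq_nonneg (f x + 1)]) (hinvpos x).le
    have h2 : (0:ℝ) ≤ ((1 + f x ^ 2) - f x) * (1 + f x ^ 2)⁻¹ :=
      mul_nonneg (by nlinarith [sq_nonneg (f x - 1)]) (hinvpos x).le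
    rw [add_mul, mul_inv_cancel₀ (hpos x).ne'] at h1
    rw [sub_mul, mul_inv_cancel₀ (hpos x).ne'] at h2
    constructor <;> linarith
  obtain ⟨K, cK, hKu⟩ := exists_beta_extension _ hkc 1 hkm
  obtain ⟨A, cA, hAu⟩ := exists_beta_extension _ hac 1 ham
  exact ⟨K, A, cK, cA, hKu, hAu⟩

lemma hewitt_ext_of_ne_zero {p : StoneCech X} (f : C(X, ℝ))
    {K A : StoneCech X → ℝ} (cK : Continuous K) (cA : Continuous A)
    (hKu : ∀ x, K (stoneCechUnit x) = (1 + f x ^ 2)⁻¹)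
    (hAu : ∀ x, A (stoneCechUnit x) = f x * (1 + f x ^ 2)⁻¹)
    (hKp : K p ≠ 0) :
    ∃ g : C((range (stoneCechUnit : X → StoneCech X) ∪ {p} : Set (StoneCech X)), ℝ),
      ∀ x : X, g ⟨stoneCechUnit x, Or.inl ⟨x, rfl⟩⟩ = f x := by
  have hpos : ∀ x : X, (0:ℝ) < 1 + f x ^ 2 := fun x => by positivity
  have hKne : ∀ y : ↥(range (stoneCechUnit : X → StoneCech X) ∪ {p}), K ↑y ≠ 0 := by
    rintro ⟨y, ⟨x, rfl⟩ | rfl⟩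
    · show K (stoneCechUnit x) ≠ 0
      rw [hKu x]
      exact inv_ne_zero (hpos x).ne'
    · exact hKp
  refine ⟨⟨fun y => A ↑y / K ↑y,
    (cA.comp continuous_subtype_val).div (cK.comp continuous_subtype_val) hKne⟩, fun x => ?_⟩
  show A (stoneCechUnit x) / K (stoneCechUnit x) = f x
  rw [hAu x, hKu x]
  field_simp

lemma exists_open_beta [T35Space X] {N : Set X} (hN : IsOpen N) {x : X} (hx : x ∈ N) :
    ∃ O : Set (StoneCech X), IsOpen O ∧ stoneCechUnit x ∈ O ∧
      stoneCechUnit ⁻¹' O ⊆ N := by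
  obtain ⟨g, cg, hgx, hgN⟩ :=
    CompletelyRegularSpace.completely_regular x Nᶜ hN.isClosed_compl (by simpa)
  let F : StoneCech X → I := stoneCechExtend cg
  refine ⟨(fun y => (F y : ℝ)) ⁻¹' Iio 1,
    isOpen_Iio.preimage (continuous_subtype_val.comp (continuous_stoneCechExtend cg)),
    ?_, ?_⟩
  · have hF : stoneCechExtend cg (stoneCechUnit x) = g x :=
      congrFun (stoneCechExtend_extends cg) x
    show (F (stoneCechUnit x) : ℝ) < 1
    rw [show F (stoneCechUnit x) = g x from hF, hgx]
    norm_num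
  · intro z hz
    by_contra hzN
    have hF : stoneCechExtend cg (stoneCechUnit z) = g z :=
      congrFun (stoneCechExtend_extends cg) z
    have h1 : g z = 1 := hgN hzN
    have hz' : (F (stoneCechUnit z) : ℝ) < 1 := hz
    rw [show F (stoneCechUnit z) = g z from hF, h1] at hz'
    simp at hz'

lemma isRealcompact_cozero {X : Type*} [TopologicalSpace X] [T35Space X]
    (G : StoneCech X → ℝ) (cG : Continuous G)
    (hG0 : ∀ y ∈ hewittSet X \ range (stoneCechUnit : X → StoneCech X), G y = 0) :
    IsRealcompact {x : X | 1/2 < G (stoneCechUnit x)} := by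
  set P : Set X := {x : X | 1/2 < G (stoneCechUnit x)} with hPdef
  intro q hq
  have cpi' : Continuous fun y : P => stoneCechUnit (y : X) :=
    continuous_stoneCechUnit.comp continuous_subtype_val
  set pi : StoneCech P → StoneCech X := stoneCechExtend cpi' with hpidef
  have cpi : Continuous pi := continuous_stoneCechExtend cpi'
  have hpiu : ∀ y : P, pi (stoneCechUnit y) = stoneCechUnit (y : X) :=
    fun y => congrFun (stoneCechExtend_extends cpi') y
  have hy2 : ∀ y : P, 1/2 < G (stoneCechUnit (y : X)) := fun y => y.2
  -- Step 1 : G (pi q) is at least 1/2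
  have hq_cl : q ∈ closure (range (stoneCechUnit : P → StoneCech P)) :=
    denseRange_stoneCechUnit _
  have hGq : 1/2 ≤ G (pi q) := by
    have h1 : pi q ∈ closure (pi '' range (stoneCechUnit : P → StoneCech P)) :=
      image_closure_subset_closure_image cpi ⟨q, hq_cl, rfl⟩
    have h2 : pi q ∈ closure {y : StoneCech X | 1/2 ≤ G y} := by
      refine closure_mono ?_ h1
      rintro _ ⟨_, ⟨y, rfl⟩, rfl⟩
      rw [hpiu y]
      exact le_of_lt (hy2 y)
    have h3 : IsClosed {y : StoneCech X | 1/2 ≤ G y} :=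
      isClosed_le continuous_const cG
    rwa [h3.closure_eq] at h2
  -- Step 2 : G (pi q) is strictly greater than 1/2
  have hGq' : 1/2 < G (pi q) := by
    rcases lt_or_eq_of_le hGq with h | h
    · exact h
    · exfalso
      have hne : ∀ y : P, G (stoneCechUnit (y:X)) - 1/2 ≠ 0 :=
        fun y => sub_ne_zero.mpr (ne_of_gt (hy2 y))
      have hwcont : Continuous fun y : P => (G (stoneCechUnit (y:X)) - 1/2)⁻¹ :=
        ((cG.comp cpi').sub continuous_const).inv₀ hne
      have hB := hewitt_inv_ne_zero hq ⟨_, hwcont⟩ (fun y => inv_ne_zero (hne y))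
        (fun z => G (pi z) - 1/2) ((cG.comp cpi).sub continuous_const)
        (fun y => by show G (pi (stoneCechUnit y)) - 1/2 = _; rw [hpiu y]; simp)
      exact hB (by show G (pi q) - 1/2 = 0; rw [← h]; ring)
  -- Step 3 : pi q lies in the Hewitt set of X
  have hpiq_hewitt : pi q ∈ hewittSet X := by
    intro f
    obtain ⟨K, A, cK, cA, hKu, hAu⟩ := exists_KA f
    have hKpi : K (pi q) ≠ 0 := by
      have hwcont : Continuous fun y : P => 1 + f (y:X) ^ 2 :=
        continuous_const.add ((f.continuous.comp continuous_subtype_val).pow 2)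
      refine hewitt_inv_ne_zero hq ⟨_, hwcont⟩
        (fun y => by show (1 + f (y:X) ^ 2) ≠ 0; positivity) (fun z => K (pi z)) (cK.comp cpi) ?_
      intro y
      show K (pi (stoneCechUnit y)) = ((1 + f (y:X) ^ 2))⁻¹
      rw [hpiu y, hKu]
    exact hewitt_ext_of_ne_zero f cK cA hKu hAu hKpi
  -- Step 4 : pi q comes from a point x of X, and x is in P
  obtain ⟨x, hx⟩ : pi q ∈ range (stoneCechUnit : X → StoneCech X) := by
    by_contra hcon
    have h0 : G (pi q) = 0 := hG0 _ ⟨hpiq_hewitt, hcon⟩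
    rw [h0] at hGq'
    norm_num at hGq'
  have hxP : x ∈ P := by
    show 1/2 < G (stoneCechUnit x)
    rw [hx]
    exact hGq'
  -- Step 5 : q equals stoneCechUnit ⟨x, hxP⟩
  refine ⟨⟨x, hxP⟩, ?_⟩
  by_contra hneq
  obtain ⟨F, hF0, hF1, hFicc⟩ := exists_continuous_zero_one_of_isClosed
    (isClosed_singleton (x := q))
    (isClosed_singleton (x := stoneCechUnit (⟨x, hxP⟩ : P)))
    (by rw [disjoint_singleton]; exact fun h => hneq h.symm)
  have hFq : F q = 0 := hF0 (mem_singleton q)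
  have hFx : F (stoneCechUnit (⟨x, hxP⟩ : P)) = 1 := hF1 (mem_singleton _)
  have hq_clA : q ∈ closure
      (stoneCechUnit '' {y : P | F (stoneCechUnit y) ≤ 1/4}) := by
    rw [mem_closure_iff]
    intro O hO hqO
    have hO' : IsOpen (O ∩ F ⁻¹' Iio (1/4)) :=
      hO.inter (isOpen_Iio.preimage F.continuous)
    have hqO' : q ∈ O ∩ F ⁻¹' Iio (1/4) := by
      refine ⟨hqO, ?_⟩
      rw [mem_preimage, mem_Iio, hFq]
      norm_num
    obtain ⟨y, hy⟩ := denseRange_stoneCechUnit.exists_mem_open hO' ⟨q, hqO'⟩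
    exact ⟨stoneCechUnit y, hy.1, ⟨y, show F (stoneCechUnit y) ≤ 1/4 from le_of_lt hy.2, rfl⟩⟩
  have hpiq_clA : pi q ∈ closure
      ((fun y : P => stoneCechUnit (y : X)) '' {y : P | F (stoneCechUnit y) ≤ 1/4}) := by
    have h1 : pi q ∈ closure (pi '' (stoneCechUnit ''
        {y : P | F (stoneCechUnit y) ≤ 1/4})) :=
      image_closure_subset_closure_image cpi ⟨q, hq_clA, rfl⟩
    refine closure_mono ?_ h1
    rintro _ ⟨_, ⟨y, hy, rfl⟩, rfl⟩
    exact ⟨y, hy, (hpiu y).symm⟩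
  have hPopen : IsOpen P := isOpen_lt continuous_const (cG.comp continuous_stoneCechUnit)
  have hNopen : IsOpen (Subtype.val '' {y : P | 1/2 < F (stoneCechUnit y)}) :=
    hPopen.isOpenMap_subtype_val _
      (isOpen_lt continuous_const (F.continuous.comp continuous_stoneCechUnit))
  have hxN : x ∈ Subtype.val '' {y : P | 1/2 < F (stoneCechUnit y)} := by
    refine ⟨⟨x, hxP⟩, ?_, rfl⟩
    show 1/2 < F (stoneCechUnit (⟨x, hxP⟩ : P))
    rw [hFx]
    norm_num
  obtain ⟨O, hOopen, hxO, hON⟩ := exists_open_beta hNopen hxN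
  rw [hx] at hxO
  obtain ⟨z, hzO, y, hyA, hzy⟩ := mem_closure_iff.mp hpiq_clA O hOopen hxO
  have hyN : (y : X) ∈ Subtype.val '' {y : P | 1/2 < F (stoneCechUnit y)} := by
    apply hON
    show stoneCechUnit (y : X) ∈ O
    have hzy' : stoneCechUnit (y : X) = z := hzy
    rw [hzy']
    exact hzO
  obtain ⟨y', hy', hy'val⟩ := hyN
  rw [show y' = y from Subtype.ext hy'val] at hy'
  have hyA' : F (stoneCechUnit y) ≤ 1/4 := hyA
  have hy'2 : 1/2 < F (stoneCechUnit y) := hy'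
  linarith

end AuxHelpers

/-- a continuous function bounded on every realcompact cozero set
is bounded on every hard subset of `X`. -/
theorem hardBounded_of_bounded_on_realcompact_cozero (X : Type*) [TopologicalSpace X]
    [T35Space X] (f : C(X, ℝ))
    (hf : ∀ P : Set X, (∃ g : C(X, ℝ), P = {x | g x ≠ 0}) → IsRealcompact P →
      ∃ M, ∀ x ∈ P, |f x| ≤ M) :
    HardBounded f := by
  intro H hH
  have hH' : IsClosed {p : hardCore X | (p : StoneCech X) ∈ stoneCechUnit '' H} := hH
  by_contra hM
  push_neg at hM
  set t : ℕ → Set (StoneCech X) :=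
    fun n => closure (stoneCechUnit '' (H ∩ {x | (n:ℝ) ≤ |f x|})) with htdef
  have htsub : ∀ n, t (n+1) ⊆ t n := by
    intro n
    apply closure_mono
    apply image_mono
    refine inter_subset_inter_right _ fun x hx => ?_
    have hc : ((n:ℝ)) ≤ ((n+1 : ℕ) : ℝ) := by exact_mod_cast Nat.le_succ n
    exact le_trans hc hx
  have htne : ∀ n, (t n).Nonempty := by
    intro n
    obtain ⟨x, hxH, hxf⟩ := hM n
    exact ⟨stoneCechUnit x, subset_closure ⟨x, ⟨hxH, le_of_lt hxf⟩, rfl⟩⟩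
  have htcl : ∀ n, IsClosed (t n) := fun n => isClosed_closure
  obtain ⟨p, hp⟩ := IsCompact.nonempty_iInter_of_sequence_nonempty_isCompact_isClosed
    t htsub htne ((htcl 0).isCompact) htcl
  rw [mem_iInter] at hp
  have hpH : p ∈ closure (stoneCechUnit '' H) :=
    closure_mono (image_mono inter_subset_left) (hp 0)
  -- p is not in the image of X
  have hpnr : p ∉ range (stoneCechUnit : X → StoneCech X) := by
    rintro ⟨x, rfl⟩
    have hNopen : IsOpen {z : X | |f z| < |f x| + 1} :=
      isOpen_lt (f.continuous.abs) continuous_const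
    have hxmem : x ∈ {z : X | |f z| < |f x| + 1} := by
      show |f x| < |f x| + 1
      linarith
    obtain ⟨O, hOopen, hxO, hON⟩ := exists_open_beta hNopen hxmem
    obtain ⟨z, hzO, w, ⟨hwH, hwf⟩, hwz⟩ :=
      mem_closure_iff.mp (hp ⌈|f x| + 1⌉₊) O hOopen hxO
    have hwN : w ∈ {z : X | |f z| < |f x| + 1} := by
      apply hON
      show stoneCechUnit w ∈ O
      rw [hwz]
      exact hzO
    have h1 : |f w| < |f x| + 1 := hwN
    have h2 : ((⌈|f x| + 1⌉₊ : ℕ) : ℝ) ≤ |f w| := hwf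
    have h3 : |f x| + 1 ≤ ((⌈|f x| + 1⌉₊ : ℕ) : ℝ) := Nat.le_ceil _
    linarith
  -- p is not in the hard core
  have hpcore : p ∉ hardCore X := by
    intro hpc
    have hval : Subtype.val '' {p : hardCore X | (p : StoneCech X) ∈ stoneCechUnit '' H}
        = stoneCechUnit '' H := by
      apply Subset.antisymm
      · rintro _ ⟨⟨z, hz⟩, hzm, rfl⟩
        exact hzm
      · rintro z hz
        have hzc : z ∈ hardCore X := by
          obtain ⟨x, _, rfl⟩ := hz
          exact Or.inl ⟨x, rfl⟩
        exact ⟨⟨z, hzc⟩, hz, rfl⟩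
    have h1 : (⟨p, hpc⟩ : hardCore X) ∈
        closure {p : hardCore X | (p : StoneCech X) ∈ stoneCechUnit '' H} := by
      rw [closure_subtype, hval]
      exact hpH
    rw [hH'.closure_eq] at h1
    obtain ⟨x, _, hxe⟩ := h1
    exact hpnr ⟨x, hxe⟩
  -- Urysohn function separating p from the closure part of the hard core
  obtain ⟨G, hG0, hG1, hGicc⟩ := exists_continuous_zero_one_of_isClosed
    (isClosed_closure (s := hewittSet X \ range (stoneCechUnit : X → StoneCech X)))
    (isClosed_singleton (x := p))
    (disjoint_singleton_right.mpr (fun hc => hpcore (Or.inr hc)))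
  have hG0' : ∀ y ∈ hewittSet X \ range (stoneCechUnit : X → StoneCech X), G y = 0 :=
    fun y hy => hG0 (subset_closure hy)
  have hRC := isRealcompact_cozero (X := X) G G.continuous hG0'
  have hcoz : ∃ g : C(X, ℝ),
      {x : X | 1/2 < G (stoneCechUnit x)} = {x | g x ≠ 0} := by
    refine ⟨⟨fun x => max (G (stoneCechUnit x) - 1/2) 0,
      ((G.continuous.comp continuous_stoneCechUnit).sub continuous_const).max
        continuous_const⟩, ?_⟩
    ext x
    simp only [mem_setOf_eq, ContinuousMap.coe_mk]
    constructor
    · intro hx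
      rw [max_eq_left (by linarith : (0:ℝ) ≤ G (stoneCechUnit x) - 1/2)]
      exact ne_of_gt (by linarith)
    · intro hx
      by_contra hc
      push_neg at hc
      exact hx (max_eq_right (by linarith : G (stoneCechUnit x) - 1/2 ≤ 0))
  obtain ⟨M, hMP⟩ := hf _ hcoz hRC
  have hn : M < ((⌈M⌉₊ + 1 : ℕ) : ℝ) := by
    have h1 : M ≤ (⌈M⌉₊ : ℝ) := Nat.le_ceil M
    push_cast
    linarith
  have hGp : G p = 1 := hG1 (mem_singleton p)
  have hpO : p ∈ G ⁻¹' Ioi (1/2) := by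
    rw [mem_preimage, mem_Ioi, hGp]
    norm_num
  obtain ⟨z, hzO, w, ⟨hwH, hwf⟩, hwz⟩ := mem_closure_iff.mp (hp (⌈M⌉₊ + 1)) _
    (isOpen_Ioi.preimage G.continuous) hpO
  have hwP : w ∈ {x : X | 1/2 < G (stoneCechUnit x)} := by
    show 1/2 < G (stoneCechUnit w)
    rw [hwz]
    exact hzO
  have h1 : |f w| ≤ M := hMP w hwP
  have h2 : ((⌈M⌉₊ + 1 : ℕ) : ℝ) ≤ |f w| := hwf
  linarith
end

section
/- Let Y be a subset of a Tychonoff space X such that Y is a finite union of hard subsets of X and Y is C*-embedded in X. Then for every g ∈ C(X) bounded away from zero on every hard subset of Y, the set Y and the zero set Z(g) are completely separated; hence Y is S-embedded in X. -/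
open Set ContinuousMap

/-- If `A` is hard, then the closure of its image in `βZ` meets `hardCore Z`
only inside the image of `A`. -/
private lemma hard_closure_aux {Z : Type*} [TopologicalSpace Z] {A : Set Z} (hA : IsHard A) :
    closure (stoneCechUnit '' A) ∩ hardCore Z ⊆ stoneCechUnit '' A := by
  rintro q ⟨hq1, hq2⟩
  have hsub : stoneCechUnit '' A ⊆ hardCore Z := by
    rintro _ ⟨a, -, rfl⟩; exact Or.inl ⟨a, rfl⟩
  have key : (⟨q, hq2⟩ : hardCore Z) ∈
      {p : hardCore Z | (p : StoneCech Z) ∈ stoneCechUnit '' A} := by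
    apply hA.closure_subset
    rw [mem_closure_iff]
    intro o ho hqo
    rw [isOpen_induced_iff] at ho
    obtain ⟨U, hU, rfl⟩ := ho
    obtain ⟨t, htU, htA⟩ := mem_closure_iff.mp hq1 U hU hqo
    exact ⟨⟨t, hsub htA⟩, htU, htA⟩
  exact key

/-- The canonical map `β(Y) → β(X)` induced by the inclusion of a `C*`-embedded
subset is injective. -/
private lemma phi_injective_aux {X : Type*} [TopologicalSpace X] (Y : Set X)
    (hC : CStarEmbedded Y)
    (hcont : Continuous fun y : Y => stoneCechUnit (y : X)) :
    Function.Injective (stoneCechExtend hcont) := by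
  intro a b hab
  by_contra hne
  obtain ⟨F, hF0, hF1, hF01⟩ := exists_continuous_zero_one_of_isClosed
    (isClosed_singleton (x := a)) (isClosed_singleton (x := b))
    (by simpa [Set.disjoint_singleton] using hne)
  set f₀ : C(Y, ℝ) := F.comp ⟨fun y : Y => stoneCechUnit y, continuous_stoneCechUnit⟩ with hf₀
  have hbnd : ∀ y : Y, |f₀ y| ≤ 1 := by
    intro y
    have := hF01 (stoneCechUnit y)
    rw [abs_le]
    constructor <;> simp only [hf₀, ContinuousMap.comp_apply, ContinuousMap.coe_mk] <;>
      [linarith [this.1]; exact this.2]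
  obtain ⟨g, hg⟩ := hC f₀ ⟨1, hbnd⟩
  have hGc : Continuous fun x : X => projIcc (0:ℝ) 1 zero_le_one (g x) :=
    continuous_projIcc.comp g.continuous
  have heq : stoneCechExtend hGc ∘ stoneCechExtend hcont =
      fun z : StoneCech Y => projIcc (0:ℝ) 1 zero_le_one (F z) := by
    apply Continuous.ext_on denseRange_stoneCechUnit
      ((continuous_stoneCechExtend hGc).comp (continuous_stoneCechExtend hcont))
      (continuous_projIcc.comp F.continuous)
    rintro _ ⟨y, rfl⟩
    simp only [Function.comp_apply]
    have h1 : stoneCechExtend hcont (stoneCechUnit y) = stoneCechUnit (y : X) :=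
      congrFun (stoneCechExtend_extends hcont) y
    have h2 : stoneCechExtend hGc (stoneCechUnit (y : X)) =
        projIcc (0:ℝ) 1 zero_le_one (g y) :=
      congrFun (stoneCechExtend_extends hGc) (y : X)
    rw [h1, h2, hg y]
    rfl
  have ha := congrFun heq a
  have hb := congrFun heq b
  simp only [Function.comp_apply] at ha hb
  rw [hab] at ha
  have hstep : projIcc (0:ℝ) 1 zero_le_one (F a) = projIcc (0:ℝ) 1 zero_le_one (F b) :=
    ha.symm.trans hb
  have hFa : F a = 0 := by simpa using hF0 rfl
  have hFb : F b = 1 := by simpa using hF1 rfl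
  rw [hFa, hFb, projIcc_of_mem zero_le_one (show (0:ℝ) ∈ Icc (0:ℝ) 1 by norm_num),
    projIcc_of_mem zero_le_one (show (1:ℝ) ∈ Icc (0:ℝ) 1 by norm_num)] at hstep
  have hval := congrArg Subtype.val hstep
  norm_num at hval

/-- The key step: a `C*`-embedded finite union of hard subsets is realcompact. -/
private lemma hewitt_subset_range_aux {X : Type*} [TopologicalSpace X]
    (Y : Set X) (n : ℕ) (H : Fin n → Set X) (hH : ∀ i, IsHard (H i))
    (hY : Y = ⋃ i, H i) (hC : CStarEmbedded Y) :
    hewittSet Y ⊆ Set.range (stoneCechUnit : Y → StoneCech Y) := by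
  intro p hp
  by_contra hpr
  have hcont : Continuous fun y : Y => stoneCechUnit (y : X) :=
    continuous_stoneCechUnit.comp continuous_subtype_val
  set φ := stoneCechExtend hcont with hφ
  have hφu : ∀ y : Y, φ (stoneCechUnit y) = stoneCechUnit (y : X) :=
    fun y => congrFun (stoneCechExtend_extends hcont) y
  set q := φ p with hq
  -- q lies in the closure of the image of Y, a finite union of closures
  have hqcl : q ∈ ⋃ i, closure (stoneCechUnit '' H i) := by
    have hpc : p ∈ closure (Set.range (stoneCechUnit : Y → StoneCech Y)) :=
      denseRange_stoneCechUnit p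
    have h1 : q ∈ closure (φ '' Set.range (stoneCechUnit : Y → StoneCech Y)) :=
      (image_closure_subset_closure_image (continuous_stoneCechExtend hcont))
        ⟨p, hpc, rfl⟩
    have h2 : φ '' Set.range (stoneCechUnit : Y → StoneCech Y) ⊆
        ⋃ i, closure (stoneCechUnit '' H i) := by
      rintro _ ⟨_, ⟨y, rfl⟩, rfl⟩
      have hyY : (y : X) ∈ ⋃ i, H i := hY ▸ y.2
      obtain ⟨i, hi⟩ := mem_iUnion.mp hyY
      rw [hφu y]
      exact mem_iUnion.mpr ⟨i, subset_closure ⟨y, hi, rfl⟩⟩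
    have hcl : IsClosed (⋃ i, closure (stoneCechUnit '' H i)) :=
      isClosed_iUnion_of_finite fun i => isClosed_closure
    exact closure_minimal h2 hcl h1
  obtain ⟨i, hqi⟩ := mem_iUnion.mp hqcl
  -- q is not in the hard core of X
  have hnotcore : q ∉ hardCore X := by
    intro hqh
    obtain ⟨a, haH, haq⟩ := hard_closure_aux (hH i) ⟨hqi, hqh⟩
    have haY : a ∈ Y := hY ▸ mem_iUnion.mpr ⟨i, haH⟩
    have : φ (stoneCechUnit (⟨a, haY⟩ : Y)) = φ p := by rw [hφu]; exact haq
    exact hpr ⟨_, phi_injective_aux Y hC hcont this⟩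
  have hqrange : q ∉ Set.range (stoneCechUnit : X → StoneCech X) :=
    fun h => hnotcore (Or.inl h)
  have hqhew : q ∉ hewittSet X := fun h =>
    hnotcore (Or.inr (subset_closure ⟨h, hqrange⟩))
  -- extract a function with no extension over q
  rw [hewittSet, Set.mem_setOf_eq] at hqhew
  push_neg at hqhew
  obtain ⟨f, hf⟩ := hqhew
  -- the auxiliary functions h = 1/(1+f²) and k = f/(1+f²)
  have hdenpos : ∀ x : X, (0:ℝ) < 1 + f x ^ 2 := fun x => by positivity
  set hden : X → ℝ := fun x => (1 + f x ^ 2)⁻¹ with hhden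
  have hdpos : ∀ x, 0 < hden x := fun x => by positivity
  have hdle : ∀ x, hden x ≤ 1 := fun x => inv_le_one_of_one_le₀ (by nlinarith [sq_nonneg (f x)])
  have hdcont : Continuous hden :=
    ((continuous_const.add ((f.continuous).pow 2)).inv₀ fun x => (hdenpos x).ne')
  have hHc : Continuous fun x : X => projIcc (0:ℝ) 1 zero_le_one (hden x) :=
    continuous_projIcc.comp hdcont
  set Hf := stoneCechExtend hHc with hHf
  have hHfu : ∀ x : X, Hf (stoneCechUnit x) = projIcc (0:ℝ) 1 zero_le_one (hden x) :=
    fun x => congrFun (stoneCechExtend_extends hHc) x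
  set kf : X → ℝ := fun x => f x * hden x with hkf
  have hkbnd : ∀ x, kf x ∈ Icc (-1:ℝ) 1 := by
    intro x
    have h1 : |f x| * hden x ≤ 1 := by
      rw [← le_div_iff₀ (hdpos x)]
      have : (hden x)⁻¹ = 1 + f x ^ 2 := by rw [hhden]; simp
      rw [div_eq_mul_inv, one_mul, this]
      nlinarith [sq_nonneg (|f x| - 1), sq_abs (f x)]
    have h2 : |kf x| ≤ 1 := by
      rw [hkf]; simp only [abs_mul, abs_of_pos (hdpos x)]; exact h1
    exact ⟨neg_le_of_abs_le h2, le_of_abs_le h2⟩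
  have hKc : Continuous fun x : X => projIcc (-1:ℝ) 1 (by norm_num) (kf x) :=
    continuous_projIcc.comp (f.continuous.mul hdcont)
  set Kf := stoneCechExtend hKc with hKf
  have hKfu : ∀ x : X, Kf (stoneCechUnit x) = projIcc (-1:ℝ) 1 (by norm_num) (kf x) :=
    fun x => congrFun (stoneCechExtend_extends hKc) x
  -- Hf vanishes at q
  have hHfq : (Hf q : ℝ) = 0 := by
    by_contra h0
    have hne : ∀ w : (Set.range (stoneCechUnit : X → StoneCech X) ∪ {q} :
        Set (StoneCech X)), (Hf (w : StoneCech X) : ℝ) ≠ 0 := by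
      rintro ⟨w, hw⟩
      rcases hw with ⟨x, rfl⟩ | rfl
      · rw [hHfu x, projIcc_of_mem zero_le_one ⟨(hdpos x).le, hdle x⟩]
        exact (hdpos x).ne'
      · exact h0
    set g : C((Set.range (stoneCechUnit : X → StoneCech X) ∪ {q} :
        Set (StoneCech X)), ℝ) :=
      ⟨fun w => (Kf (w : StoneCech X) : ℝ) / (Hf (w : StoneCech X) : ℝ), by
        apply Continuous.div
        · exact continuous_subtype_val.comp
            ((continuous_stoneCechExtend hKc).comp continuous_subtype_val)
        · exact continuous_subtype_val.comp
            ((continuous_stoneCechExtend hHc).comp continuous_subtype_val)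
        · exact fun w => hne w⟩ with hgdef
    obtain ⟨x, hx⟩ := hf g
    apply hx
    show (Kf (stoneCechUnit x) : ℝ) / (Hf (stoneCechUnit x) : ℝ) = f x
    rw [hHfu x, hKfu x, projIcc_of_mem zero_le_one ⟨(hdpos x).le, hdle x⟩,
      projIcc_of_mem (by norm_num : (-1:ℝ) ≤ 1) (hkbnd x)]
    field_simp [hkf]
    exact mul_div_cancel_right₀ (f x) (hdpos x).ne'
  -- now contradict p ∈ hewittSet Y using r = 1 + f²
  set r : C(Y, ℝ) := ⟨fun y : Y => 1 + f (y : X) ^ 2, by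
    exact continuous_const.add ((f.continuous.comp continuous_subtype_val).pow 2)⟩ with hr
  obtain ⟨gp, hgp⟩ := hp r
  set pt : (Set.range (stoneCechUnit : Y → StoneCech Y) ∪ {p} : Set (StoneCech Y)) :=
    ⟨p, Or.inr rfl⟩ with hpt
  set c := gp pt with hc
  have hball : gp ⁻¹' (Metric.ball c 1) ∈ nhds pt :=
    gp.continuous.continuousAt.preimage_mem_nhds (Metric.ball_mem_nhds c one_pos)
  obtain ⟨U, hU, hUsub⟩ := (mem_nhds_subtype _ pt _).mp hball
  have hHφcont : Continuous fun z : StoneCech Y => (Hf (φ z) : ℝ) :=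
    continuous_subtype_val.comp
      ((continuous_stoneCechExtend hHc).comp (continuous_stoneCechExtend hcont))
  have hU' : (fun z : StoneCech Y => (Hf (φ z) : ℝ)) ⁻¹' (Iio ((|c| + 2)⁻¹)) ∈ nhds p := by
    apply hHφcont.continuousAt.preimage_mem_nhds
    apply Iio_mem_nhds
    rw [← hq, hHfq]
    positivity
  have hdense : ((U ∩ (fun z : StoneCech Y => (Hf (φ z) : ℝ)) ⁻¹' (Iio ((|c| + 2)⁻¹))) ∩
      Set.range (stoneCechUnit : Y → StoneCech Y)).Nonempty :=
    mem_closure_iff_nhds.mp (denseRange_stoneCechUnit p) _ (Filter.inter_mem hU hU')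
  obtain ⟨_, ⟨hmU, hmU'⟩, y, rfl⟩ := hdense
  -- the two estimates contradict each other
  have hry : r y < |c| + 1 := by
    have hmem : (⟨stoneCechUnit y, Or.inl ⟨y, rfl⟩⟩ :
        (Set.range (stoneCechUnit : Y → StoneCech Y) ∪ {p} : Set (StoneCech Y))) ∈
        gp ⁻¹' (Metric.ball c 1) := hUsub hmU
    have hdist : |gp ⟨stoneCechUnit y, Or.inl ⟨y, rfl⟩⟩ - c| < 1 := by
      simpa [Metric.mem_ball, Real.dist_eq] using hmem
    have := hgp y
    rw [this] at hdist
    calc r y = (r y - c) + c := by ring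
    _ ≤ |r y - c| + |c| := by
        have := le_abs_self (r y - c); have := le_abs_self c; linarith [le_abs_self c,
          le_abs_self (r y - c)]
    _ < 1 + |c| := by linarith
    _ = |c| + 1 := by ring
  have hry2 : |c| + 2 < r y := by
    have hval : (Hf (φ (stoneCechUnit y)) : ℝ) = hden (y : X) := by
      rw [hφu y, hHfu, projIcc_of_mem zero_le_one ⟨(hdpos _).le, hdle _⟩]
    have hlt : hden (y : X) < (|c| + 2)⁻¹ := by
      have h' := hmU'
      rw [mem_preimage, mem_Iio, hval] at h'
      exact h'
    have hpos2 : (0:ℝ) < |c| + 2 := by positivity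
    have hrpos : (0:ℝ) < r y := by
      have := hdenpos (y : X)
      simp only [hr, ContinuousMap.coe_mk]
      linarith
    have hdinv : hden (y : X) = (r y)⁻¹ := by
      simp [hhden, hr]
    rw [hdinv] at hlt
    exact (inv_lt_inv₀ hrpos hpos2).mp hlt
  linarith

/-- a `C*`-embedded finite union of hard sets is completely separated
from `Z(g)` for each `g` bounded away from zero on every hard subset of it; hence
it is `S`-embedded. -/
theorem sEmbedded_of_finite_union_of_hard (X : Type*) [TopologicalSpace X] [T35Space X]
    (Y : Set X) (m : ℕ) (H : Fin m → Set X) (hH : ∀ i, IsHard (H i))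
    (hY : Y = ⋃ i, H i) (hC : CStarEmbedded Y) :
    (∀ g : C(X, ℝ), BddAwayOnHards g Y → CompletelySeparatedIn X Y {x | g x = 0}) ∧
      SEmbedded Y := by
  have hsub := hewitt_subset_range_aux Y m H hH hY hC
  have hcore : hardCore Y = Set.range (stoneCechUnit : Y → StoneCech Y) := by
    rw [hardCore, Set.diff_eq_empty.mpr hsub, closure_empty, Set.union_empty]
  have huniv : IsHard (Set.univ : Set Y) := by
    have hset : {p : hardCore Y | (p : StoneCech Y) ∈ stoneCechUnit '' (Set.univ : Set Y)} =
        Set.univ := by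
      rw [Set.eq_univ_iff_forall]
      intro pp
      have h2 : (pp : StoneCech Y) ∈ Set.range (stoneCechUnit : Y → StoneCech Y) :=
        (Set.ext_iff.mp hcore _).mp pp.2
      obtain ⟨y, hy⟩ := h2
      exact ⟨y, trivial, hy⟩
    rw [IsHard, hset]
    exact isClosed_univ
  constructor
  · intro g hg
    obtain ⟨m0, hm0, hbd⟩ := hg Set.univ huniv
    refine ⟨⟨fun x => min (|g x| / m0) 1,
      ((g.continuous.abs).div_const m0).min continuous_const⟩, ?_, ?_, ?_⟩
    · intro x hx
      have : m0 ≤ |g x| := hbd ⟨x, hx⟩ trivial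
      simpa using min_eq_right ((one_le_div hm0).mpr this)
    · intro x hx
      simp only [Set.mem_setOf_eq] at hx
      simp [hx]
    · intro x
      exact ⟨le_min (div_nonneg (abs_nonneg _) hm0.le) zero_le_one, min_le_right _ _⟩
  · intro f hf
    obtain ⟨M, hM⟩ := hf Set.univ huniv
    exact hC f ⟨M, fun x => hM x trivial⟩
end

section
/- There exist a Tychonoff space X, a subset T ⊆ X, and f ∈ C(X) with Z(f) ∩ T = ∅ such that f is not bounded away from zero on some hard subset of T. Concretely: X = ℕ with the discrete topology, T = 2ℕ (the even numbers), and f : ℕ → ℝ defined by f(x) = 1/x for x ∈ T and f(x) = 0 otherwise; then Z(f) ∩ T = ∅ but f is not bounded away from zero on the hard set T itself. -/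
open Set ContinuousMap

lemma hewitt_sub {Y : Type*} [TopologicalSpace Y] (e : C(Y, ℝ))
    (hfin : ∀ L : ℝ, {y : Y | |e y - L| < 1/2}.Finite) :
    {p : StoneCech Y | ∀ f : C(Y, ℝ), ∃ g : C((Set.range (stoneCechUnit : Y → StoneCech Y) ∪ {p} :
      Set (StoneCech Y)), ℝ), ∀ x : Y, g ⟨stoneCechUnit x, Or.inl ⟨x, rfl⟩⟩ = f x}
      ⊆ Set.range (stoneCechUnit : Y → StoneCech Y) := by
  intro p hp
  by_contra hpr
  obtain ⟨g, hg⟩ := hp e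
  set P : (Set.range (stoneCechUnit : Y → StoneCech Y) ∪ {p} : Set (StoneCech Y)) :=
    ⟨p, Or.inr rfl⟩ with hP
  have hopen : IsOpen (g ⁻¹' Metric.ball (g P) (1/2)) :=
    Metric.isOpen_ball.preimage g.continuous
  obtain ⟨U, hU, hUeq⟩ := isOpen_induced_iff.mp hopen
  have hpU : p ∈ U := by
    have h1 : P ∈ (Subtype.val ⁻¹' U :
        Set (Set.range (stoneCechUnit : Y → StoneCech Y) ∪ {p} : Set (StoneCech Y))) := by
      rw [hUeq]
      exact Metric.mem_ball_self (by norm_num)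
    exact h1
  have hFfin : (stoneCechUnit '' {y : Y | |e y - g P| < 1/2}).Finite :=
    (hfin (g P)).image _
  have hFcl : IsClosed (stoneCechUnit '' {y : Y | |e y - g P| < 1/2}) :=
    hFfin.isClosed
  have hpW : p ∈ U \ (stoneCechUnit '' {y : Y | |e y - g P| < 1/2}) := by
    refine ⟨hpU, fun hmem => ?_⟩
    obtain ⟨y, -, hy⟩ := hmem
    exact hpr ⟨y, hy⟩
  have hWopen : IsOpen (U \ (stoneCechUnit '' {y : Y | |e y - g P| < 1/2})) :=
    hU.sdiff hFcl
  obtain ⟨y, hq⟩ := denseRange_stoneCechUnit.exists_mem_open hWopen ⟨p, hpW⟩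
  have hyU : (⟨stoneCechUnit y, Or.inl ⟨y, rfl⟩⟩ :
      (Set.range (stoneCechUnit : Y → StoneCech Y) ∪ {p} : Set (StoneCech Y))) ∈
      (Subtype.val ⁻¹' U) := hq.1
  rw [hUeq] at hyU
  have : |e y - g P| < 1/2 := by
    have := hyU
    simp only [Set.mem_preimage, Metric.mem_ball, Real.dist_eq] at this
    rwa [hg y] at this
  exact hq.2 ⟨y, this, rfl⟩


/-- counterexample without pseudocompactness: `X = ℕ` discrete,
`T = 2ℕ` (positive even numbers), `f x = 1/x` on `T` and `0` elsewhere. Then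
`Z(f) ∩ T = ∅`, `T` is hard in itself, but `f` is not bounded away from zero on it. -/
theorem counterexample_not_bddAway :
    ∃ f : C(ℕ, ℝ), (∀ n : ℕ, f n = if 0 < n ∧ Even n then (1 : ℝ) / n else 0) ∧
      (∀ n ∈ {n : ℕ | 0 < n ∧ Even n}, f n ≠ 0) ∧
      IsHard (Set.univ : Set {n : ℕ | 0 < n ∧ Even n}) ∧
      ¬ ∃ m > 0, ∀ x : {n : ℕ | 0 < n ∧ Even n}, m ≤ |f x.1| := by
  refine ⟨⟨fun n => if 0 < n ∧ Even n then (1 : ℝ) / n else 0,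
    continuous_of_discreteTopology⟩, fun n => rfl, ?_, ?_, ?_⟩
  · intro n hn
    simp only [ContinuousMap.coe_mk]
    rw [if_pos (show 0 < n ∧ Even n from hn)]
    exact one_div_ne_zero (show ((n:ℕ):ℝ) ≠ 0 from Nat.cast_ne_zero.mpr hn.1.ne')
  · -- IsHard univ
    set Y := {n : ℕ | 0 < n ∧ Even n} with hY
    have hfin : ∀ L : ℝ, {y : Y | |((ContinuousMap.mk (fun y : Y => (y.1 : ℝ))
        continuous_of_discreteTopology) y) - L| < 1/2}.Finite := by
      intro L
      obtain ⟨N, hN⟩ := exists_nat_gt (L + 1/2)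
      have hsub : {y : Y | |((y.1 : ℕ) : ℝ) - L| < 1/2} ⊆ Subtype.val ⁻¹' (Set.Iio N) := by
        intro y hy
        simp only [Set.mem_preimage, Set.mem_Iio]
        have h1 : |(y.1 : ℝ) - L| < 1/2 := hy
        have h2 : (y.1 : ℝ) < L + 1/2 := by
          cases' abs_lt.mp h1 with _ h; linarith
        exact_mod_cast h2.trans hN
      exact (((Set.finite_Iio N).preimage Subtype.val_injective.injOn)).subset hsub
    have hrc : hewittSet Y ⊆ Set.range (stoneCechUnit : Y → StoneCech Y) :=
      hewitt_sub _ hfin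
    have hdiff : hewittSet Y \ Set.range (stoneCechUnit : Y → StoneCech Y) = ∅ :=
      Set.diff_eq_empty.mpr hrc
    have hset : {p : hardCore Y | (p : StoneCech Y) ∈ stoneCechUnit '' (Set.univ : Set Y)}
        = Set.univ := by
      ext p
      simp only [Set.image_univ, Set.mem_setOf_eq, Set.mem_univ, iff_true]
      have h2 : (p : StoneCech Y) ∈ Set.range (stoneCechUnit : Y → StoneCech Y) ∪
          closure (hewittSet Y \ Set.range (stoneCechUnit : Y → StoneCech Y)) := p.2
      rw [hdiff, closure_empty, Set.union_empty] at h2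
      exact h2
    rw [IsHard, hset]
    exact isClosed_univ
  · rintro ⟨m, hm, h⟩
    obtain ⟨k, hk⟩ := exists_nat_gt (1/m)
    have hmem : 2*k+2 ∈ {n : ℕ | 0 < n ∧ Even n} := ⟨by omega, ⟨k+1, by ring⟩⟩
    have hthis := h ⟨2*k+2, hmem⟩
    simp only [ContinuousMap.coe_mk] at hthis
    rw [if_pos (show 0 < 2*k+2 ∧ Even (2*k+2) from hmem)] at hthis
    have hpos : (0:ℝ) < ((2*k+2 : ℕ) : ℝ) := by exact_mod_cast (by omega : 0 < 2*k+2)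
    rw [abs_of_pos (one_div_pos.mpr hpos)] at hthis
    have h1 : ((2*k+2 : ℕ) : ℝ) ≤ 1/m := by
      rw [le_one_div hpos hm]
      exact hthis
    have h2 : (k:ℝ) < ((2*k+2 : ℕ) : ℝ) := by push_cast; linarith
    linarith
end

section
/- Let T be a nearly pseudocompact subset of a Tychonoff space X and f ∈ C(X). Then f is bounded away from zero on every hard subset of T if and only if Z(f) ∩ T = ∅. -/
open Set ContinuousMap

/-- for a nearly pseudocompact subset `T` (every hard subset of `T` is
compact), `f` is bounded away from zero on every hard subset of `T` iff `Z(f) ∩ T = ∅`. -/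
theorem bddAway_iff_zero_set_disjoint_of_nearlyPseudocompact (X : Type*)
    [TopologicalSpace X] [T35Space X] (T : Set X)
    (hnp : ∀ H : Set T, IsHard H → IsCompact H) (f : C(X, ℝ)) :
    BddAwayOnHards f T ↔ {x | f x = 0} ∩ T = ∅ := by
  constructor
  · intro hb
    ext x
    simp only [Set.mem_inter_iff, Set.mem_setOf_eq, Set.mem_empty_iff_false, iff_false]
    rintro ⟨hfx, hxT⟩
    have hhard : IsHard ({⟨x, hxT⟩} : Set T) := by
      have : {p : hardCore T | (p : StoneCech T) ∈ stoneCechUnit '' ({⟨x, hxT⟩} : Set T)}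
          = (Subtype.val ⁻¹' {stoneCechUnit (⟨x, hxT⟩ : T)}) := by
        ext p; simp [Set.mem_image, eq_comm]
      rw [IsHard, this]
      exact (isClosed_singleton).preimage continuous_subtype_val
    obtain ⟨m, hm, hle⟩ := hb _ hhard
    have := hle ⟨x, hxT⟩ rfl
    simp [hfx] at this
    linarith
  · intro hz H hH
    have hK : IsCompact H := hnp H hH
    rcases H.eq_empty_or_nonempty with rfl | hne
    · exact ⟨1, one_pos, by simp⟩
    · have hcont : Continuous fun x : T => |f x.1| :=
        (f.continuous.comp continuous_subtype_val).abs
      obtain ⟨x0, hx0, hmin⟩ := hK.exists_isMinOn hne hcont.continuousOn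
      refine ⟨|f x0.1|, ?_, fun x hx => hmin hx⟩
      have hne0 : f x0.1 ≠ 0 := by
        intro h0
        have : (x0 : X) ∈ {x | f x = 0} ∩ T := ⟨h0, x0.2⟩
        rw [hz] at this
        exact this
      exact abs_pos.mpr hne0
end

section
/- Let X be a Tychonoff space and f ∈ S(X). If f is bounded away from zero on every hard subset of X, then f is nowhere zero, 1/f is continuous, 1/f is bounded on every hard subset of X, and hence f is a unit of the ring S(X). -/
open Set ContinuousMap

lemma isHard_singleton {Y : Type*} [TopologicalSpace Y] (y : Y) : IsHard ({y} : Set Y) := by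
  have : {p : hardCore Y | (p : StoneCech Y) ∈ stoneCechUnit '' ({y} : Set Y)}
      = (Subtype.val : hardCore Y → StoneCech Y) ⁻¹' {stoneCechUnit y} := by
    ext p; simp [Set.image_singleton]
  rw [IsHard, this]
  exact (isClosed_singleton).preimage continuous_subtype_val

/-- if `f ∈ S(X)` is bounded away from zero on every hard subset of `X`,
then `f` is nowhere zero, `1/f` is continuous and hard-bounded, and `f` is a unit
of `S(X)`. -/
theorem unit_of_bddAway (X : Type*) [TopologicalSpace X] [T35Space X]
    (f : C(X, ℝ)) (hf : HardBounded f)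
    (hb : ∀ H : Set X, IsHard H → ∃ m > 0, ∀ x ∈ H, m ≤ |f x|) :
    (∀ x, f x ≠ 0) ∧ Continuous (fun x => (f x)⁻¹) ∧
      (∀ H : Set X, IsHard H → ∃ M, ∀ x ∈ H, |(f x)⁻¹| ≤ M) ∧
      ∃ g : C(X, ℝ), HardBounded g ∧ f * g = 1 := by
  have hne : ∀ x, f x ≠ 0 := by
    intro x
    obtain ⟨m, hm, h⟩ := hb {x} (isHard_singleton x)
    have := h x rfl
    intro h0
    rw [h0, abs_zero] at this
    linarith
  have hcont : Continuous (fun x => (f x)⁻¹) := f.continuous.inv₀ hne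
  have hinvbd : ∀ H : Set X, IsHard H → ∃ M, ∀ x ∈ H, |(f x)⁻¹| ≤ M := by
    intro H hH
    obtain ⟨m, hm, h⟩ := hb H hH
    refine ⟨m⁻¹, fun x hx => ?_⟩
    rw [abs_inv]
    exact inv_anti₀ hm (h x hx)
  refine ⟨hne, hcont, hinvbd, ⟨⟨fun x => (f x)⁻¹, hcont⟩, hinvbd, ?_⟩⟩
  ext x
  exact mul_inv_cancel₀ (hne x)
end

section
/- Let X be a Tychonoff space and T ⊆ X a C*-embedded subset. Then T is S-embedded in X if and only if for every f ∈ C(X) such that the restriction f|_T is a unit of the ring S(T), the sets Z(f) and T are completely separated in X. -/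
open Set ContinuousMap

/-- a `C*`-embedded `T` is `S`-embedded iff for every `f ∈ C(X)` whose
restriction to `T` is a unit of `S(T)`, the sets `Z(f)` and `T` are completely separated. -/
theorem sEmbedded_iff_unit_restrictions_separated (X : Type*) [TopologicalSpace X]
    [T35Space X] (T : Set X) (hC : CStarEmbedded T) :
    SEmbedded T ↔ ∀ f : C(X, ℝ),
      (HardBounded (f.restrict T) ∧
        ∃ g : C(T, ℝ), HardBounded g ∧ f.restrict T * g = 1) →
      CompletelySeparatedIn X {x | f x = 0} T := by
  constructor
  · rintro hS f ⟨hfb, g, hgb, hfg⟩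
    obtain ⟨G, hG⟩ := hS g hgb
    refine ⟨⟨fun x => max 0 (min 1 (1 - f x * G x)), by
      exact continuous_const.max (continuous_const.min
        (continuous_const.sub (f.continuous.mul G.continuous)))⟩, ?_, ?_, ?_⟩
    · intro x hx
      have hx0 : f x = 0 := hx
      simp [hx0]
    · intro x hx
      have h1 : f x * G x = 1 := by
        have := congrArg (fun u : C(T, ℝ) => u ⟨x, hx⟩) hfg
        simpa [ContinuousMap.restrict_apply, hG ⟨x, hx⟩] using this
      simp [h1]
    · intro x
      exact ⟨le_max_left _ _, max_le zero_le_one (min_le_left _ _)⟩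
  · intro hU f hf
    have hpos : ∀ x : T, (0:ℝ) < 1 + |f x| := fun x => by positivity
    have hc1 : Continuous fun x : T => (1:ℝ) + |f x| :=
      continuous_const.add f.continuous.abs
    set b : C(T, ℝ) := ⟨fun x => f x / (1 + |f x|),
      f.continuous.div hc1 fun x => (hpos x).ne'⟩ with hb_def
    set k : C(T, ℝ) := ⟨fun x => 1 / (1 + |f x|),
      continuous_const.div hc1 fun x => (hpos x).ne'⟩ with hk_def
    obtain ⟨B, hB⟩ := hC b ⟨1, fun x => by
      rw [hb_def]
      simp only [ContinuousMap.coe_mk]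
      rw [abs_div, abs_of_pos (hpos x)]
      exact (div_le_one (hpos x)).2 (by linarith [abs_nonneg (f x)])⟩
    obtain ⟨K, hK⟩ := hC k ⟨1, fun x => by
      rw [hk_def]
      simp only [ContinuousMap.coe_mk]
      rw [abs_div, abs_of_pos (hpos x), abs_one]
      exact (div_le_one (hpos x)).2 (by linarith [abs_nonneg (f x)])⟩
    have hKx : ∀ x : T, K x = 1 / (1 + |f x|) := fun x => hK x
    set g' : C(T, ℝ) := ⟨fun x => 1 + |f x|, hc1⟩ with hg'_def
    have hKhb : HardBounded (K.restrict T) := by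
      intro H _
      refine ⟨1, fun x _ => ?_⟩
      rw [ContinuousMap.restrict_apply, hKx x,
        abs_of_pos (by positivity : (0:ℝ) < 1 / (1 + |f x|))]
      rw [div_le_one (hpos x)]
      linarith [abs_nonneg (f x)]
    have hg'hb : HardBounded g' := by
      intro H hH
      obtain ⟨M, hM⟩ := hf H hH
      refine ⟨1 + M, fun x hx => ?_⟩
      rw [hg'_def]
      simp only [ContinuousMap.coe_mk]
      rw [abs_of_pos (hpos x)]
      linarith [hM x hx]
    have hmul : K.restrict T * g' = 1 := by
      ext x
      simp only [ContinuousMap.mul_apply, ContinuousMap.restrict_apply,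
        ContinuousMap.one_apply, hg'_def, ContinuousMap.coe_mk, hKx x]
      field_simp
    obtain ⟨h, h1, h0, hIcc⟩ := hU K ⟨hKhb, g', hg'hb, hmul⟩
    · -- build the extension
      have hD : ∀ x : X, (0:ℝ) < |K x| + h x := by
        intro x
        by_cases hx : K x = 0
        · have := h1 x hx
          rw [this, hx]
          norm_num
        · have := (hIcc x).1
          have : (0:ℝ) < |K x| := abs_pos.2 hx
          linarith [(hIcc x).1]
      refine ⟨⟨fun x => B x * (1 - h x) / (|K x| + h x),
        (B.continuous.mul (continuous_const.sub h.continuous)).div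
          (K.continuous.abs.add h.continuous) fun x => (hD x).ne'⟩, ?_⟩
      intro x
      simp only [ContinuousMap.coe_mk]
      have hh0 : h x = 0 := h0 x x.2
      have hKv : K x = 1 / (1 + |f x|) := hKx x
      have hBv : B x = f x / (1 + |f x|) := hB x
      rw [hh0, hKv, hBv, abs_of_pos (by positivity : (0:ℝ) < 1 / (1 + |f x|))]
      field_simp
      ring
end
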